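/- Let (|ψ_i⟩)_{i<n} and (|φ_k⟩)_{k<n} be families of vectors in ℂ^d and (p_i), (q_k) probability weights with Σ_i p_i |ψ_i⟩⟨ψ_i| = Σ_k q_k |φ_k⟩⟨φ_k| (equality of density matrices), where all |ψ_i⟩, |φ_k⟩ are unit vectors. Then there exists an n×n unitary matrix U such that √(q_k) |φ_k⟩ = Σ_i √(p_i) U_{ik} |ψ_i⟩ for all k. -/

import Mathlib

open Matrix

local notation "⟪" x ", " y "⟫" => @inner ℂ _ _ x y

/-- Euclidean decomposition into singles. -/
lemma euclid_decomp {n : ℕ} (v : EuclideanSpace ℂ (Fin n)) :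
    ∑ i, v i • EuclideanSpace.single i (1:ℂ) = v := by
  have h := (EuclideanSpace.basisFun (Fin n) ℂ).toBasis.sum_repr v
  simpa [OrthonormalBasis.coe_toBasis, OrthonormalBasis.coe_toBasis_repr_apply,
    EuclideanSpace.basisFun_repr, EuclideanSpace.basisFun_apply] using h

/-- A linear isometry of a finite-dimensional Euclidean space is given by a unitary matrix. -/
lemma exists_unitary_matrix {n : ℕ}
    (W : EuclideanSpace ℂ (Fin n) →ₗᵢ[ℂ] EuclideanSpace ℂ (Fin n)) :
    ∃ M ∈ Matrix.unitaryGroup (Fin n) ℂ,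
      Matrix.toEuclideanLin M = W.toLinearMap := by
  classical
  set M : Matrix (Fin n) (Fin n) ℂ :=
    Matrix.of fun i j => W (EuclideanSpace.single j 1) i with hMdef
  have hMunit : M ∈ Matrix.unitaryGroup (Fin n) ℂ := by
    rw [Matrix.mem_unitaryGroup_iff']
    ext i j
    have h2 := W.inner_map_map (EuclideanSpace.single i (1:ℂ)) (EuclideanSpace.single j (1:ℂ))
    simp only [PiLp.inner_apply, RCLike.inner_apply, EuclideanSpace.single_apply] at h2
    simp only [Matrix.mul_apply, Matrix.star_apply, Matrix.of_apply, Matrix.one_apply, hMdef,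
      Complex.star_def]
    simp only [mul_comm ((starRingEnd ℂ) _)]
    rw [h2]
    simp [Finset.sum_ite_eq, eq_comm]
  refine ⟨M, hMunit, ?_⟩
  rw [Matrix.toEuclideanLin_eq_toLin_orthonormal]
  apply Module.Basis.ext (EuclideanSpace.basisFun (Fin n) ℂ).toBasis
  intro j
  rw [Matrix.toLin_self]
  simp only [OrthonormalBasis.coe_toBasis, EuclideanSpace.basisFun_apply,
    LinearIsometry.coe_toLinearMap, hMdef, Matrix.of_apply]
  exact euclid_decomp (W (EuclideanSpace.single j 1))

/-- Core HJW matrix fact: equal Gram products give a unitary intertwiner. -/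
theorem exists_unitary_mul_conjTranspose_eq {n d : ℕ}
    (A B : Matrix (Fin d) (Fin n) ℂ) (hAB : A * Aᴴ = B * Bᴴ) :
    ∃ M ∈ Matrix.unitaryGroup (Fin n) ℂ, M * Aᴴ = Bᴴ := by
  classical
  set g : EuclideanSpace ℂ (Fin d) →ₗ[ℂ] EuclideanSpace ℂ (Fin n) :=
    Matrix.toEuclideanLin Aᴴ with hg
  set h : EuclideanSpace ℂ (Fin d) →ₗ[ℂ] EuclideanSpace ℂ (Fin n) :=
    Matrix.toEuclideanLin Bᴴ with hh
  have key : ∀ (C : Matrix (Fin d) (Fin n) ℂ) (x : EuclideanSpace ℂ (Fin d)),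
      ⟪Matrix.toEuclideanLin Cᴴ x, Matrix.toEuclideanLin Cᴴ x⟫
        = ⟪x, Matrix.toEuclideanLin (C * Cᴴ) x⟫ := by
    intro C x
    have hadj : Matrix.toEuclideanLin Cᴴ = LinearMap.adjoint (Matrix.toEuclideanLin C) :=
      Matrix.toEuclideanLin_conjTranspose_eq_adjoint C
    have hmul : Matrix.toEuclideanLin (C * Cᴴ)
        = (Matrix.toEuclideanLin C).comp (Matrix.toEuclideanLin Cᴴ) := by
      simp only [Matrix.toEuclideanLin_eq_toLin_orthonormal]
      exact Matrix.toLin_mul _ _ _ _ _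
    rw [hmul, LinearMap.comp_apply, hadj, LinearMap.adjoint_inner_left]
  have hinner : ∀ x, ⟪g x, g x⟫ = ⟪h x, h x⟫ := by
    intro x
    rw [hg, hh, key A x, key B x, hAB]
  have hnorm : ∀ x, ‖h x‖ = ‖g x‖ := by
    intro x
    rw [@norm_eq_sqrt_re_inner ℂ, @norm_eq_sqrt_re_inner ℂ, hinner x]
  have hker : LinearMap.ker g ≤ LinearMap.ker h := by
    intro x hx
    rw [LinearMap.mem_ker] at hx ⊢
    have := hnorm x
    rw [hx, norm_zero] at this
    exact norm_eq_zero.mp this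
  set e := LinearMap.quotKerEquivRange g with he
  set L0 : LinearMap.range g →ₗ[ℂ] EuclideanSpace ℂ (Fin n) :=
    (Submodule.liftQ (LinearMap.ker g) h hker).comp e.symm.toLinearMap with hL0def
  have hL0 : ∀ x : EuclideanSpace ℂ (Fin d),
      L0 ⟨g x, LinearMap.mem_range_self g x⟩ = h x := by
    intro x
    have h1 : e (Submodule.Quotient.mk x) = ⟨g x, LinearMap.mem_range_self g x⟩ :=
      Subtype.ext (LinearMap.quotKerEquivRange_apply_mk g x)
    have h2 : e.symm ⟨g x, LinearMap.mem_range_self g x⟩ = Submodule.Quotient.mk x := by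
      rw [LinearEquiv.symm_apply_eq]; exact h1.symm
    simp [hL0def, h2, Submodule.liftQ_apply]
  have hL0iso : ∀ s : LinearMap.range g, ‖L0 s‖ = ‖s‖ := by
    rintro ⟨s, hs⟩
    obtain ⟨x, rfl⟩ := hs
    rw [hL0 x]
    have : ‖(⟨g x, LinearMap.mem_range_self g x⟩ : LinearMap.range g)‖ = ‖g x‖ := rfl
    rw [this, hnorm x]
  set L : LinearMap.range g →ₗᵢ[ℂ] EuclideanSpace ℂ (Fin n) := ⟨L0, hL0iso⟩ with hLdef
  obtain ⟨M, hMunit, hMW⟩ := exists_unitary_matrix L.extend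
  have hW : ∀ x, L.extend (g x) = h x := by
    intro x
    have h3 := L.extend_apply ⟨g x, LinearMap.mem_range_self g x⟩
    calc L.extend (g x)
        = L.extend ((⟨g x, LinearMap.mem_range_self g x⟩ : LinearMap.range g) : _) := rfl
    _ = L ⟨g x, LinearMap.mem_range_self g x⟩ := h3
    _ = h x := hL0 x
  refine ⟨M, hMunit, ?_⟩
  apply Matrix.toEuclideanLin.injective
  have hcomp : Matrix.toEuclideanLin (M * Aᴴ)
      = (Matrix.toEuclideanLin M).comp (Matrix.toEuclideanLin Aᴴ) := by
    simp only [Matrix.toEuclideanLin_eq_toLin_orthonormal]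
    exact Matrix.toLin_mul _ _ _ _ _
  rw [hcomp, hMW]
  ext x : 1
  exact hW x

/-- Unitary freedom of ensembles (Hughston–Jozsa–Wootters): if two ensembles of unit vectors
with probability weights give the same density matrix, then they are related by a unitary
matrix mixing the (square-root weighted) states. -/
theorem unitary_freedom_of_ensembles {n d : ℕ}
    (ψ φ : Fin n → (Fin d → ℂ)) (p q : Fin n → ℝ)
    (hp0 : ∀ i, 0 ≤ p i) (hq0 : ∀ k, 0 ≤ q k)
    (hp1 : ∑ i, p i = 1) (hq1 : ∑ k, q k = 1)
    (hψ : ∀ i, ∑ a, ‖ψ i a‖ ^ 2 = 1)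
    (hφ : ∀ k, ∑ a, ‖φ k a‖ ^ 2 = 1)
    (hρ : ∑ i, (p i : ℂ) •
            Matrix.of (fun a b => ψ i a * (starRingEnd ℂ) (ψ i b))
          = ∑ k, (q k : ℂ) •
              Matrix.of (fun a b => φ k a * (starRingEnd ℂ) (φ k b))) :
    ∃ U ∈ Matrix.unitaryGroup (Fin n) ℂ,
      ∀ k a, (Real.sqrt (q k) : ℂ) * φ k a
        = ∑ i, (Real.sqrt (p i) : ℂ) * U i k * ψ i a := by
  classical
  set A : Matrix (Fin d) (Fin n) ℂ :=
    Matrix.of fun a i => (Real.sqrt (p i) : ℂ) * ψ i a with hAdef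
  set B : Matrix (Fin d) (Fin n) ℂ :=
    Matrix.of fun a k => (Real.sqrt (q k) : ℂ) * φ k a with hBdef
  have hAB : A * Aᴴ = B * Bᴴ := by
    ext a b
    have h1 := congrFun (congrFun hρ a) b
    simp only [Matrix.sum_apply, Matrix.smul_apply, Matrix.of_apply, smul_eq_mul] at h1
    simp only [Matrix.mul_apply, Matrix.conjTranspose_apply, Matrix.of_apply, hAdef, hBdef,
      star_mul', Complex.star_def, Complex.conj_ofReal]
    have eP : ∀ i, (Real.sqrt (p i) : ℂ) * ψ i a
        * ((Real.sqrt (p i) : ℂ) * (starRingEnd ℂ) (ψ i b))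
        = (p i : ℂ) * (ψ i a * (starRingEnd ℂ) (ψ i b)) := by
      intro i
      rw [show ((p i : ℝ) : ℂ) = (Real.sqrt (p i) : ℂ) * (Real.sqrt (p i) : ℂ) by
        rw [← Complex.ofReal_mul, Real.mul_self_sqrt (hp0 i)]]
      ring
    have eQ : ∀ k, (Real.sqrt (q k) : ℂ) * φ k a
        * ((Real.sqrt (q k) : ℂ) * (starRingEnd ℂ) (φ k b))
        = (q k : ℂ) * (φ k a * (starRingEnd ℂ) (φ k b)) := by
      intro k
      rw [show ((q k : ℝ) : ℂ) = (Real.sqrt (q k) : ℂ) * (Real.sqrt (q k) : ℂ) by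
        rw [← Complex.ofReal_mul, Real.mul_self_sqrt (hq0 k)]]
      ring
    rw [Finset.sum_congr rfl fun i _ => eP i, Finset.sum_congr rfl fun k _ => eQ k]
    exact h1
  obtain ⟨M, hM, hMA⟩ := exists_unitary_mul_conjTranspose_eq A B hAB
  refine ⟨Mᴴ, ?_, ?_⟩
  · rw [← Matrix.star_eq_conjTranspose]
    exact Unitary.star_mem hM
  · intro k a
    have h2 := congrFun (congrFun hMA k) a
    have h3 := congrArg (starRingEnd ℂ) h2
    simp only [Matrix.mul_apply, Matrix.conjTranspose_apply, Matrix.of_apply, map_sum,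
      Complex.star_def, Complex.conj_conj, hAdef, hBdef] at h3
    rw [← h3]
    refine Finset.sum_congr rfl fun i _ => ?_
    simp only [Matrix.conjTranspose_apply, Complex.star_def, _root_.map_mul, Complex.conj_conj]
    ring
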